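/- Let (H, σ) be a K₃-coloured graph, i.e., H is a graph and σ : V(H) → ℤ/3 assigns distinct colours to adjacent vertices. Then there is a colour homomorphism from (H, σ) to P∞³ (a graph homomorphism γ from H to the infinite path on ℤ with γ(v) mod 3 = σ(v) for all v) if and only if no cycle of H is wrapped, i.e., every cycle of H has wrap equal to 0. -/

import Mathlib

namespace Stmt19

open SimpleGraph

variable {β : Type*} {H : SimpleGraph β}

/-- The weight of a dart. -/
def fw (σ : β → ZMod 3) (d : H.Dart) : ℤ :=
  if σ d.toProd.2 = σ d.toProd.1 + 1 then 1 else -1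

/-- The wrap of a walk. -/
def wrap (σ : β → ZMod 3) {a b : β} (p : H.Walk a b) : ℤ :=
  (p.darts.map (fw σ)).sum

lemma zf1 : ∀ a b : ZMod 3, a ≠ b →
    (if b = a + 1 then (1 : ℤ) else -1) = -(if a = b + 1 then (1 : ℤ) else -1) := by decide

lemma zf2 : ∀ a b : ZMod 3, a ≠ b → ¬(b = a + 1) → b - a = -1 := by decide

@[simp] lemma wrap_nil (σ : β → ZMod 3) {a : β} : wrap σ (Walk.nil : H.Walk a a) = 0 := rfl

@[simp] lemma wrap_cons (σ : β → ZMod 3) {a b c : β} (h : H.Adj a b) (p : H.Walk b c) :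
    wrap σ (Walk.cons h p) = fw σ ⟨(a, b), h⟩ + wrap σ p := by
  simp [wrap, Walk.darts_cons]

@[simp] lemma wrap_append (σ : β → ZMod 3) {a b c : β} (p : H.Walk a b) (q : H.Walk b c) :
    wrap σ (p.append q) = wrap σ p + wrap σ q := by
  simp [wrap, Walk.darts_append]

@[simp] lemma wrap_copy (σ : β → ZMod 3) {a b a' b' : β} (p : H.Walk a b)
    (ha : a = a') (hb : b = b') : wrap σ (p.copy ha hb) = wrap σ p := by
  simp [wrap, Walk.darts_copy]

lemma fw_symm {σ : β → ZMod 3} (hσ : ∀ x y, H.Adj x y → σ x ≠ σ y) (d : H.Dart) :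
    fw σ d.symm = -fw σ d := by
  exact zf1 (σ d.toProd.2) (σ d.toProd.1) (hσ _ _ d.symm.adj)

lemma wrap_reverse {σ : β → ZMod 3} (hσ : ∀ x y, H.Adj x y → σ x ≠ σ y) {a b : β}
    (p : H.Walk a b) : wrap σ p.reverse = -wrap σ p := by
  simp only [wrap]
  rw [Walk.darts_reverse, List.map_reverse, List.sum_reverse, List.map_map]
  have : (fw σ ∘ SimpleGraph.Dart.symm : H.Dart → ℤ) = (fun d => -fw σ d) := by
    funext d; exact fw_symm hσ d
  rw [this]
  generalize p.darts = l
  induction l with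
  | nil => simp
  | cons d l ih => simp only [List.map_cons, List.sum_cons, ih]; ring

lemma wrap_cast {σ : β → ZMod 3} (hσ : ∀ x y, H.Adj x y → σ x ≠ σ y) {a b : β}
    (p : H.Walk a b) : ((wrap σ p : ℤ) : ZMod 3) = σ b - σ a := by
  induction p with
  | nil => simp
  | @cons u x w h q ih =>
    rw [wrap_cons]
    push_cast
    rw [ih, fw]
    by_cases hc : σ x = σ u + 1
    · simp only [hc, if_pos rfl]; push_cast; ring
    · rw [if_neg hc]
      have := zf2 (σ u) (σ x) (hσ _ _ h) hc
      push_cast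
      linear_combination -this


lemma path_closing {w v : β} (q : H.Walk w v) (hq : q.IsPath) (he : s(v, w) ∈ q.edges) :
    q.length = 1 := by
  cases q with
  | nil => simp at he
  | @cons _ x _ h' q' =>
    rw [Walk.edges_cons, List.mem_cons] at he
    rcases he with he | he
    · rw [Sym2.eq_iff] at he
      have hx : x = v := by
        rcases he with ⟨hvw, hwx⟩ | ⟨hvx, _⟩
        · exact (hvw.trans hwx).symm
        · exact hvx.symm
      subst hx
      have : q' = Walk.nil := Walk.isPath_iff_eq_nil.mp hq.of_cons
      subst this
      simp
    · exfalso
      rw [Sym2.eq_swap] at he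
      have := Walk.fst_mem_support_of_mem_edges q' he
      exact ((Walk.cons_isPath_iff h' q').mp hq).2 this

lemma wrap_closed {σ : β → ZMod 3} (hσ : ∀ x y, H.Adj x y → σ x ≠ σ y)
    (hcyc : ∀ (v : β) (w : H.Walk v v), w.IsCycle → wrap σ w = 0) :
    ∀ (n : ℕ) (v : β) (p : H.Walk v v), p.length ≤ n → wrap σ p = 0 := by
  classical
  intro n
  induction n with
  | zero =>
    intro v p hp
    cases p with
    | nil => simp
    | cons h q => simp at hp
  | succ n ih =>
    intro v p hp
    cases p with
    | nil => simp
    | @cons _ w _ h q =>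
      by_cases hnd : q.support.Nodup
      · -- q is a path
        have hqp : q.IsPath := (Walk.isPath_def q).mpr hnd
        cases q with
        | nil => exact absurd rfl h.ne
        | @cons _ x _ h' q' =>
          cases q' with
          | nil =>
            -- backtrack v - w - v
            have h0 : fw σ (⟨(w, v), h'⟩ : H.Dart) = fw σ (Dart.symm ⟨(v, w), h⟩) := rfl
            have h1 := fw_symm hσ (⟨(v, w), h⟩ : H.Dart)
            simp only [wrap_cons, wrap_nil]
            rw [h0, h1]
            ring
          | cons h'' q'' =>
            -- length ≥ 3, a cycle
            have hlen : (Walk.cons h' (Walk.cons h'' q'')).length ≠ 1 := by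
              simp [Walk.length_cons]
            have hne : s(v, w) ∉ (Walk.cons h' (Walk.cons h'' q'')).edges := fun he =>
              hlen (path_closing _ hqp he)
            exact hcyc _ _ ((Walk.cons_isCycle_iff _ h).mpr ⟨hqp, hne⟩)
      · -- some vertex u is duplicated in q.support
        obtain ⟨u, hu⟩ := List.exists_duplicate_iff_not_nodup.mpr hnd
        have hcount : 2 ≤ q.support.count u := List.duplicate_iff_two_le_count.mp hu
        have hu1 : u ∈ q.support := hu.mem
        have hspec : (q.takeUntil u hu1).append (q.dropUntil u hu1) = q := q.take_spec hu1
        have h1 : (q.takeUntil u hu1).support.count u = 1 :=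
          q.count_support_takeUntil_eq_one hu1
        have hsupp : q.support
            = (q.takeUntil u hu1).support ++ (q.dropUntil u hu1).support.tail := by
          conv_lhs => rw [← hspec]
          exact Walk.support_append _ _
        have h2 : 1 ≤ ((q.dropUntil u hu1).support.tail).count u := by
          rw [hsupp, List.count_append, h1] at hcount
          omega
        have hnn : ¬ (q.dropUntil u hu1).Nil := by
          intro hnil
          rw [Walk.nil_iff_support_eq.mp hnil] at h2
          simp at h2
        obtain ⟨x, h2adj, q3, hq2⟩ := Walk.not_nil_iff.mp hnn
        have hu3 : u ∈ q3.support := by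
          rw [hq2] at h2
          simp only [Walk.support_cons, List.tail_cons] at h2
          exact List.count_pos_iff.mp (by omega)
        have hspec3 : (q3.takeUntil u hu3).append (q3.dropUntil u hu3) = q3 :=
          q3.take_spec hu3
        have ew : wrap σ (Walk.cons h q) =
            wrap σ ((Walk.cons h (q.takeUntil u hu1)).append (q3.dropUntil u hu3)) +
            wrap σ (Walk.cons h2adj (q3.takeUntil u hu3)) := by
          conv_lhs => rw [← hspec, hq2, ← hspec3]
          simp only [wrap_append, wrap_cons]
          ring
        have l1 : (q.takeUntil u hu1).length + (q.dropUntil u hu1).length = q.length := by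
          conv_rhs => rw [← hspec]
          exact (Walk.length_append _ _).symm
        have l2 : (q3.takeUntil u hu3).length + (q3.dropUntil u hu3).length = q3.length := by
          conv_rhs => rw [← hspec3]
          exact (Walk.length_append _ _).symm
        have l3 : (q.dropUntil u hu1).length = q3.length + 1 := by
          rw [hq2]; simp
        have hq : q.length ≤ n := by
          simp only [Walk.length_cons] at hp
          omega
        have IH1 := ih v ((Walk.cons h (q.takeUntil u hu1)).append (q3.dropUntil u hu3))
          (by simp only [Walk.length_append, Walk.length_cons]; omega)
        have IH2 := ih u (Walk.cons h2adj (q3.takeUntil u hu3))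
          (by simp only [Walk.length_cons]; omega)
        omega


lemma wrap_diff {σ : β → ZMod 3} (hσ : ∀ x y, H.Adj x y → σ x ≠ σ y)
    (hzero : ∀ (v : β) (p : H.Walk v v), wrap σ p = 0) {c x y : β}
    (p : H.Walk c x) (q : H.Walk c y) (h : H.Adj x y) :
    wrap σ q = wrap σ p + fw σ ⟨(x, y), h⟩ := by
  have h0 := hzero c ((p.append (Walk.cons h Walk.nil)).append q.reverse)
  rw [wrap_append, wrap_append, wrap_reverse hσ, wrap_cons, wrap_nil] at h0
  linarith

lemma zf3 : ∀ a : ZMod 3, ¬ a = a + 1 + 1 := by decide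

end Stmt19

open Stmt19
open SimpleGraph

/-- Let `(H, σ)` be a `K₃`-coloured graph (`σ : V(H) → ℤ/3` with
adjacent vertices receiving distinct colours).  There is a colour homomorphism from
`(H, σ)` to `P∞³` — a map `γ : V(H) → ℤ` with `|γ(x) − γ(y)| = 1` for every edge `xy`
and `γ(v) ≡ σ(v) (mod 3)` for every vertex — if and only if no cycle of `H` is
wrapped, i.e. every cycle has wrap `0`, where the wrap of a cycle is the sum over its
darts `uv` of `+1` if `σ(v) = σ(u) + 1` and `−1` otherwise. -/
theorem stmt_19 {β : Type*} (H : SimpleGraph β) (σ : β → ZMod 3)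
    (hσ : ∀ x y, H.Adj x y → σ x ≠ σ y) :
    (∃ γ : β → ℤ,
      (∀ x y, H.Adj x y → γ x - γ y = 1 ∨ γ y - γ x = 1) ∧
      ∀ v, ((γ v : ZMod 3) = σ v)) ↔
    (∀ (v : β) (w : H.Walk v v), w.IsCycle →
      (w.darts.map
        (fun d => if σ d.toProd.2 = σ d.toProd.1 + 1 then (1 : ℤ) else -1)).sum = 0) := by
  classical
  constructor
  · rintro ⟨γ, hedge, hmod⟩ v w hw
    have dartval : ∀ d : H.Dart,
        (if σ d.toProd.2 = σ d.toProd.1 + 1 then (1 : ℤ) else -1)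
          = γ d.toProd.2 - γ d.toProd.1 := by
      intro d
      rcases hedge _ _ d.adj with h1 | h1
      · have h2 : σ d.toProd.1 = σ d.toProd.2 + 1 := by
          calc σ d.toProd.1 = ((γ d.toProd.1 : ℤ) : ZMod 3) := (hmod _).symm
            _ = ((γ d.toProd.2 + 1 : ℤ) : ZMod 3) := by rw [show (γ d.toProd.1 : ℤ) = γ d.toProd.2 + 1 by linarith]
            _ = σ d.toProd.2 + 1 := by push_cast; rw [hmod]
        have hne : ¬ σ d.toProd.2 = σ d.toProd.1 + 1 := by
          intro hc
          rw [h2] at hc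
          exact zf3 _ hc
        rw [if_neg hne]; linarith
      · have h2 : σ d.toProd.2 = σ d.toProd.1 + 1 := by
          calc σ d.toProd.2 = ((γ d.toProd.2 : ℤ) : ZMod 3) := (hmod _).symm
            _ = ((γ d.toProd.1 + 1 : ℤ) : ZMod 3) := by rw [show (γ d.toProd.2 : ℤ) = γ d.toProd.1 + 1 by linarith]
            _ = σ d.toProd.1 + 1 := by push_cast; rw [hmod]
        rw [if_pos h2]; linarith
    have tele : ∀ {a b : β} (p : H.Walk a b),
        (p.darts.map
          (fun d => if σ d.toProd.2 = σ d.toProd.1 + 1 then (1 : ℤ) else -1)).sum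
          = γ b - γ a := by
      intro a b p
      induction p with
      | nil => simp
      | @cons a' x' b' h q ih =>
        rw [Walk.darts_cons, List.map_cons, List.sum_cons, ih, dartval]
        ring
    rw [tele w]
    ring
  · intro hcyc
    have hzero : ∀ (v : β) (p : H.Walk v v), wrap σ p = 0 := fun v p =>
      wrap_closed hσ hcyc p.length v p le_rfl
    set r : β → β := fun v => (H.connectedComponentMk v).out with hrdef
    have hrr : ∀ v, H.Reachable (r v) v := fun v =>
      SimpleGraph.ConnectedComponent.exact ((H.connectedComponentMk v).out_eq)
    refine ⟨fun v => ((σ (r v)).val : ℤ) + wrap σ (hrr v).some, ?_, ?_⟩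
    · intro x y h
      have e : r y = r x := by
        simp only [hrdef]
        rw [SimpleGraph.ConnectedComponent.eq.mpr h.symm.reachable]
      have hcopy : wrap σ (((hrr y).some).copy e rfl) = wrap σ (hrr y).some := wrap_copy _ _ _ _
      have hd := wrap_diff hσ hzero (hrr x).some (((hrr y).some).copy e rfl) h
      rw [hcopy] at hd
      have hval : ((σ (r y)).val : ℤ) = ((σ (r x)).val : ℤ) := by rw [e]
      by_cases hc : σ y = σ x + 1
      · right
        dsimp only
        rw [hval, hd, fw, if_pos hc]
        ring
      · left
        dsimp only
        rw [hval, hd, fw, if_neg hc]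
        ring
    · intro v
      dsimp only
      push_cast
      rw [wrap_cast hσ (hrr v).some]
      simp [ZMod.natCast_val, ZMod.cast_id]
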